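/- Let μ, ν be probability measures on a compact convex set Ω ⊂ ℝ^d, and let φ_μ, φ_ν be Lipschitz functions with Lip(φ_μ − φ_ν) ≤ L. If φ_μ maximizes the concave functional J_μ and the first variation of J_μ at φ_ν in direction (φ_μ − φ_ν) equals ∫(φ_μ − φ_ν) d(μ_{φ_ν*} − μ) where μ_{φ_ν*} = ν, then 0 ≤ J_μ(φ_μ) − J_μ(φ_ν) ≤ L · W₁(μ, ν). -/
import Mathlib


open MeasureTheory

/-- The 1-Wasserstein distance, as the infimum over couplings of `∫ |x - y| dγ`. -/
noncomputable def W1 {d : ℕ} (μ ν : Measure (EuclideanSpace ℝ (Fin d))) : ℝ :=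
  sInf { r : ℝ | ∃ γ : Measure (EuclideanSpace ℝ (Fin d) × EuclideanSpace ℝ (Fin d)),
    γ.fst = μ ∧ γ.snd = ν ∧ r = ∫ p, ‖p.1 - p.2‖ ∂γ }

/-- let `μ, ν` be probability measures on a compact convex `Ω ⊂ ℝ^d`,
`φ_μ, φ_ν` Lipschitz with `Lip(φ_μ - φ_ν) ≤ L`; if `φ_μ` maximizes the concave
functional `J_μ` and the first-variation (concavity) bound
`J_μ(φ_μ) - J_μ(φ_ν) ≤ ∫ (φ_μ - φ_ν) d(ν - μ)` holds (where `ν = μ_{φ_ν*}`), then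
`0 ≤ J_μ(φ_μ) - J_μ(φ_ν) ≤ L · W₁(μ, ν)`. -/
theorem stmt14 {d : ℕ} (Ω : Set (EuclideanSpace ℝ (Fin d)))
    (hΩc : IsCompact Ω) (hΩconv : Convex ℝ Ω)
    (μ ν : Measure (EuclideanSpace ℝ (Fin d)))
    [IsProbabilityMeasure μ] [IsProbabilityMeasure ν]
    (hμΩ : μ Ωᶜ = 0) (hνΩ : ν Ωᶜ = 0)
    (J : (EuclideanSpace ℝ (Fin d) → ℝ) → ℝ)
    (φμ φν : EuclideanSpace ℝ (Fin d) → ℝ) (L : ℝ) (hL : 0 ≤ L)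
    (hLipμ : ∃ K : NNReal, LipschitzWith K φμ)
    (hLipν : ∃ K : NNReal, LipschitzWith K φν)
    (hLip : LipschitzWith (Real.toNNReal L) (fun x => φμ x - φν x))
    (hmax : ∀ ψ : EuclideanSpace ℝ (Fin d) → ℝ, J ψ ≤ J φμ)
    (hfirstvar : J φμ - J φν ≤
      (∫ x, (φμ x - φν x) ∂ν) - ∫ x, (φμ x - φν x) ∂μ) :
    0 ≤ J φμ - J φν ∧ J φμ - J φν ≤ L * W1 μ ν := by
  set f : EuclideanSpace ℝ (Fin d) → ℝ := fun x => φμ x - φν x with hf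
  have hfc : Continuous f := hLip.continuous
  have hΩm : MeasurableSet Ω := hΩc.isClosed.measurableSet
  -- bound on Ω
  obtain ⟨C, hC⟩ := hΩc.isBounded.exists_norm_le
  obtain ⟨M, hM⟩ : ∃ M : ℝ, ∀ x ∈ Ω, |f x| ≤ M := by
    rcases (hΩc.image hfc).isBounded.exists_norm_le with ⟨M, hM⟩
    exact ⟨M, fun x hx => hM _ ⟨x, hx, rfl⟩⟩
  -- key: for any coupling r bound
  set S := { r : ℝ | ∃ γ : Measure (EuclideanSpace ℝ (Fin d) × EuclideanSpace ℝ (Fin d)),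
    γ.fst = μ ∧ γ.snd = ν ∧ r = ∫ p, ‖p.1 - p.2‖ ∂γ } with hS
  have hkey : ∀ r ∈ S, J φμ - J φν ≤ L * r := by
    rintro r ⟨γ, hγ1, hγ2, rfl⟩
    haveI : IsProbabilityMeasure γ := by
      constructor
      have : γ.fst Set.univ = μ Set.univ := by rw [hγ1]
      simpa [Measure.fst_univ] using this
    have hae : ∀ᵐ p ∂γ, p.1 ∈ Ω ∧ p.2 ∈ Ω := by
      have h1 : γ {p | p.1 ∉ Ω} = 0 := by
        have := Measure.fst_apply (ρ := γ) hΩm.compl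
        rw [hγ1] at this
        simpa [Set.preimage] using this.symm.trans hμΩ
      have h2 : γ {p | p.2 ∉ Ω} = 0 := by
        have := Measure.snd_apply (ρ := γ) hΩm.compl
        rw [hγ2] at this
        simpa [Set.preimage] using this.symm.trans hνΩ
      have := measure_union_null h1 h2
      filter_upwards [measure_eq_zero_iff_ae_notMem.mp this] with p hp
      simp only [Set.mem_union, Set.mem_setOf_eq, not_or, not_not] at hp
      exact hp
    have hint1 : Integrable (fun p : EuclideanSpace ℝ (Fin d) × EuclideanSpace ℝ (Fin d) => f p.1) γ := by
      refine (integrable_const M).mono' ((hfc.comp continuous_fst).aestronglyMeasurable) ?_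
      filter_upwards [hae] with p hp
      simpa using hM _ hp.1
    have hint2 : Integrable (fun p : EuclideanSpace ℝ (Fin d) × EuclideanSpace ℝ (Fin d) => f p.2) γ := by
      refine (integrable_const M).mono' ((hfc.comp continuous_snd).aestronglyMeasurable) ?_
      filter_upwards [hae] with p hp
      simpa using hM _ hp.2
    have hintn : Integrable (fun p : EuclideanSpace ℝ (Fin d) × EuclideanSpace ℝ (Fin d) => ‖p.1 - p.2‖) γ := by
      refine (integrable_const (C + C)).mono' ((continuous_fst.sub continuous_snd).norm.aestronglyMeasurable) ?_
      filter_upwards [hae] with p hp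
      simp only [norm_norm]
      calc ‖p.1 - p.2‖ ≤ ‖p.1‖ + ‖p.2‖ := norm_sub_le _ _
        _ ≤ C + C := add_le_add (hC _ hp.1) (hC _ hp.2)
    have hmarg : (∫ x, f x ∂ν) - ∫ x, f x ∂μ = ∫ p, (f p.2 - f p.1) ∂γ := by
      rw [integral_sub hint2 hint1, ← hγ1, ← hγ2]
      rw [Measure.fst, Measure.snd,
        integral_map measurable_snd.aemeasurable (hfc.aestronglyMeasurable),
        integral_map measurable_fst.aemeasurable (hfc.aestronglyMeasurable)]
    have hpt : ∀ᵐ p ∂γ, f p.2 - f p.1 ≤ L * ‖p.1 - p.2‖ := by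
      refine Filter.Eventually.of_forall fun p => ?_
      have := hLip.dist_le_mul p.2 p.1
      rw [Real.dist_eq] at this
      calc f p.2 - f p.1 ≤ |f p.2 - f p.1| := le_abs_self _
        _ ≤ (Real.toNNReal L : ℝ) * dist p.2 p.1 := this
        _ = L * ‖p.1 - p.2‖ := by
            rw [Real.coe_toNNReal L hL, dist_eq_norm, norm_sub_rev]
    calc J φμ - J φν ≤ (∫ x, f x ∂ν) - ∫ x, f x ∂μ := hfirstvar
      _ = ∫ p, (f p.2 - f p.1) ∂γ := hmarg
      _ ≤ ∫ p, L * ‖p.1 - p.2‖ ∂γ :=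
          integral_mono_ae (hint2.sub hint1) (hintn.const_mul L) hpt
      _ = L * ∫ p, ‖p.1 - p.2‖ ∂γ := integral_const_mul _ _
  have hSne : S.Nonempty := ⟨_, μ.prod ν, Measure.fst_prod, Measure.snd_prod, rfl⟩
  have h0 : 0 ≤ J φμ - J φν := sub_nonneg.mpr (hmax φν)
  refine ⟨h0, ?_⟩
  rcases eq_or_lt_of_le hL with hL0 | hLpos
  · obtain ⟨r, hr⟩ := hSne
    have := hkey r hr
    rw [← hL0] at this ⊢
    simpa using this
  · rw [show L * W1 μ ν = L * sInf S from rfl, ← div_le_iff₀' hLpos]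
    exact le_csInf hSne fun r hr => (div_le_iff₀' hLpos).mpr (hkey r hr)
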